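/- Let X = ℕ with the metric d(k,l) = √|k! − l!| and fix η > 1. Let r_k = η^k e^{−η}/k! be the Poisson(η) probability mass function. Then: (i) the first moment with respect to d exists, i.e. ∑_{k=0}^∞ d(k,0) · r_k = ∑_{k=1}^∞ √(k! − 1) · η^k e^{−η}/k! < ∞; but (ii) the summability condition fails: the family ( d(k,0) · √(r_k) )_{k∈ℕ} is not summable; in particular ∑_{k=1}^∞ √(k!) · √(η^k e^{−η}/k!) = ∑_{k=1}^∞ η^{k/2} e^{−η/2} = ∞. -/

import Mathlib

open Filter

private lemma sqrt_pow_aux (x : ℝ) (hx : 0 ≤ x) (k : ℕ) :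
    Real.sqrt (x ^ k) = Real.sqrt x ^ k := by
  induction k with
  | zero => simp
  | succ n ih => rw [pow_succ, pow_succ, Real.sqrt_mul (by positivity), ih]

/-- Example 2: on `ℕ` with the metric `d(k,l) = √|k! − l!|`, the
Poisson(η) distribution (η > 1) has a finite first moment w.r.t. `d`, but the
summability condition fails; in particular
`∑ √(k!) √(η^k e^{−η}/k!) = ∑ η^{k/2} e^{−η/2} = ∞`. -/
theorem statement9
    (η : ℝ) (hη : 1 < η) :
    (Summable fun k : ℕ =>
      Real.sqrt ((k.factorial : ℝ) - 1) * (η ^ k * Real.exp (-η) / (k.factorial : ℝ))) ∧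
    (¬ Summable fun k : ℕ =>
      Real.sqrt ((k.factorial : ℝ) - 1) *
        Real.sqrt (η ^ k * Real.exp (-η) / (k.factorial : ℝ))) ∧
    (¬ Summable fun k : ℕ =>
      Real.sqrt (k.factorial : ℝ) *
        Real.sqrt (η ^ k * Real.exp (-η) / (k.factorial : ℝ))) := by
  have hη0 : 0 < η := lt_trans one_pos hη
  have hexp : 0 < Real.exp (-η) := Real.exp_pos _
  have hs1 : 1 < Real.sqrt η := by
    have h := Real.sqrt_lt_sqrt (by norm_num) hη
    rwa [Real.sqrt_one] at h
  have hgeo : Tendsto (fun k : ℕ => Real.sqrt η ^ k) atTop atTop :=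
    tendsto_pow_atTop_atTop_of_one_lt hs1
  have hfacpos : ∀ k : ℕ, (0 : ℝ) < (k.factorial : ℝ) := fun k => by
    exact_mod_cast k.factorial_pos
  refine ⟨?_, ?_, ?_⟩
  · -- finite first moment
    have hg : Summable (fun k : ℕ =>
        η ^ k * Real.exp (-η) / Real.sqrt (k.factorial : ℝ)) := by
      apply summable_of_ratio_norm_eventually_le (r := 1/2) (by norm_num)
      filter_upwards [eventually_ge_atTop (⌈4 * η ^ 2⌉₊)] with n hn
      have h1 : 4 * η ^ 2 ≤ (n : ℝ) + 1 := by
        have h2 : 4 * η ^ 2 ≤ (⌈4 * η ^ 2⌉₊ : ℝ) := Nat.le_ceil _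
        have h3 : ((⌈4 * η ^ 2⌉₊ : ℕ) : ℝ) ≤ (n : ℝ) := by exact_mod_cast hn
        linarith
      have hsn : (0 : ℝ) < Real.sqrt ((n : ℝ) + 1) := Real.sqrt_pos.mpr (by positivity)
      have h2η : 2 * η ≤ Real.sqrt ((n : ℝ) + 1) := by
        have : Real.sqrt (4 * η ^ 2) ≤ Real.sqrt ((n : ℝ) + 1) := Real.sqrt_le_sqrt h1
        rwa [show 4 * η ^ 2 = (2 * η) ^ 2 by ring, Real.sqrt_sq (by positivity)] at this
      have hratio : η / Real.sqrt ((n : ℝ) + 1) ≤ 1 / 2 := by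
        rw [div_le_div_iff₀ hsn (by norm_num)]
        linarith
      have hfn := hfacpos n
      have hsf : (0 : ℝ) < Real.sqrt (n.factorial : ℝ) := Real.sqrt_pos.mpr hfn
      rw [Real.norm_of_nonneg (by positivity), Real.norm_of_nonneg (by positivity)]
      have hfs : ((n + 1).factorial : ℝ) = ((n : ℝ) + 1) * (n.factorial : ℝ) := by
        rw [Nat.factorial_succ]; push_cast; ring
      rw [hfs, Real.sqrt_mul (by positivity)]
      have key : η ^ (n + 1) * Real.exp (-η) /
          (Real.sqrt ((n : ℝ) + 1) * Real.sqrt (n.factorial : ℝ)) =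
          (η / Real.sqrt ((n : ℝ) + 1)) *
            (η ^ n * Real.exp (-η) / Real.sqrt (n.factorial : ℝ)) := by
        rw [pow_succ]; field_simp
      rw [key]
      apply mul_le_mul_of_nonneg_right hratio (by positivity)
    apply hg.of_nonneg_of_le (fun k => by positivity)
    intro k
    have hfk := hfacpos k
    have hsk : (0 : ℝ) < Real.sqrt (k.factorial : ℝ) := Real.sqrt_pos.mpr hfk
    calc Real.sqrt ((k.factorial : ℝ) - 1) * (η ^ k * Real.exp (-η) / (k.factorial : ℝ))
        ≤ Real.sqrt (k.factorial : ℝ) * (η ^ k * Real.exp (-η) / (k.factorial : ℝ)) := by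
          apply mul_le_mul_of_nonneg_right (Real.sqrt_le_sqrt (by linarith)) (by positivity)
      _ = η ^ k * Real.exp (-η) / Real.sqrt (k.factorial : ℝ) := by
          rw [← Real.mul_self_sqrt hfk.le]
          field_simp
          rw [Real.sqrt_sq hsk.le]
  · -- summability condition fails
    intro hsum
    have hb : ∀ᶠ k : ℕ in atTop,
        Real.sqrt η ^ k * Real.sqrt (Real.exp (-η) / 2) ≤
          Real.sqrt ((k.factorial : ℝ) - 1) *
            Real.sqrt (η ^ k * Real.exp (-η) / (k.factorial : ℝ)) := by
      filter_upwards [eventually_ge_atTop 2] with k hk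
      have hfk := hfacpos k
      have hf2 : (2 : ℝ) ≤ (k.factorial : ℝ) := by
        have : 2 ≤ k.factorial := le_trans hk (Nat.self_le_factorial k)
        exact_mod_cast this
      have e1 : Real.sqrt η ^ k * Real.sqrt (Real.exp (-η) / 2) =
          Real.sqrt (η ^ k * (Real.exp (-η) / 2)) := by
        rw [Real.sqrt_mul (by positivity), sqrt_pow_aux η hη0.le]
      have e2 : η ^ k * (Real.exp (-η) / 2) =
          ((k.factorial : ℝ) / 2) * (η ^ k * Real.exp (-η) / (k.factorial : ℝ)) := by
        field_simp
      rw [e1, e2, Real.sqrt_mul (by positivity)]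
      apply mul_le_mul_of_nonneg_right (Real.sqrt_le_sqrt (by linarith)) (Real.sqrt_nonneg _)
    have htop : Tendsto (fun k : ℕ =>
        Real.sqrt ((k.factorial : ℝ) - 1) *
          Real.sqrt (η ^ k * Real.exp (-η) / (k.factorial : ℝ))) atTop atTop :=
      tendsto_atTop_mono' _ hb
        (hgeo.atTop_mul_const (Real.sqrt_pos.mpr (by positivity)))
    exact not_tendsto_nhds_of_tendsto_atTop htop 0 hsum.tendsto_atTop_zero
  · intro hsum
    have key : (fun k : ℕ => Real.sqrt (k.factorial : ℝ) *
        Real.sqrt (η ^ k * Real.exp (-η) / (k.factorial : ℝ))) =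
        fun k : ℕ => Real.sqrt η ^ k * Real.sqrt (Real.exp (-η)) := by
      funext k
      have hfk := hfacpos k
      rw [← Real.sqrt_mul hfk.le]
      have : (k.factorial : ℝ) * (η ^ k * Real.exp (-η) / (k.factorial : ℝ)) =
          η ^ k * Real.exp (-η) := by field_simp
      rw [this, Real.sqrt_mul (by positivity), sqrt_pow_aux η hη0.le]
    rw [key] at hsum
    have htop : Tendsto (fun k : ℕ => Real.sqrt η ^ k * Real.sqrt (Real.exp (-η)))
        atTop atTop := hgeo.atTop_mul_const (Real.sqrt_pos.mpr hexp)
    exact not_tendsto_nhds_of_tendsto_atTop htop 0 hsum.tendsto_atTop_zero
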